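/- Define W : (0,1) → ℝ by W(θ) = Σₖ mᵏ·Φ((√(σ² + σₖ²)·Φ⁻¹(c) + σ²μ − σ²θ)/(−σₖ)) − θ. If Σₖ mᵏ/σₖ ≤ √(2π)/σ², then W'(θ) ≤ 0 for all θ ∈ (0,1), and consequently W has a unique zero in (0,1). -/

import Mathlib

open MeasureTheory ProbabilityTheory Filter

/-- The standard normal density `φ`. -/
noncomputable def stdGaussianPDF (x : ℝ) : ℝ := Real.exp (-x ^ 2 / 2) / Real.sqrt (2 * Real.pi)

/-- The standard normal CDF `Φ`. -/
noncomputable def stdGaussianCDF (x : ℝ) : ℝ := ∫ t in Set.Iic x, stdGaussianPDF t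

lemma pdf_cont : Continuous stdGaussianPDF := by
  unfold stdGaussianPDF; continuity

lemma pdf_nonneg (x : ℝ) : 0 ≤ stdGaussianPDF x := by
  unfold stdGaussianPDF; positivity

lemma pdf_pos (x : ℝ) : 0 < stdGaussianPDF x := by
  unfold stdGaussianPDF
  have := Real.pi_pos
  positivity

lemma pdf_le (x : ℝ) : stdGaussianPDF x ≤ 1 / Real.sqrt (2 * Real.pi) := by
  unfold stdGaussianPDF
  have h : Real.exp (-x ^ 2 / 2) ≤ 1 := by
    rw [Real.exp_le_one_iff]; nlinarith [sq_nonneg x]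
  have := Real.pi_pos
  gcongr

lemma pdf_integrable : Integrable stdGaussianPDF := by
  unfold stdGaussianPDF
  apply Integrable.div_const
  have h := integrable_exp_neg_mul_sq (by norm_num : (0:ℝ) < 1/2)
  convert h using 2 with x
  ring_nf

lemma integral_pdf : ∫ x, stdGaussianPDF x = 1 := by
  unfold stdGaussianPDF
  rw [integral_div]
  have h := integral_gaussian (1/2 : ℝ)
  have h2 : ∫ x : ℝ, Real.exp (-x ^ 2 / 2) = Real.sqrt (2 * Real.pi) := by
    rw [show (fun x : ℝ => Real.exp (-x^2/2)) = fun x : ℝ => Real.exp (-(1/2) * x^2) by funext x; ring_nf] at *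
    rw [h]; rw [show Real.pi / (1/2) = 2 * Real.pi by ring]
  rw [h2, div_self]
  have := Real.pi_pos
  positivity


lemma cdf_eq (y : ℝ) : stdGaussianCDF y = stdGaussianCDF 0 + ∫ t in (0:ℝ)..y, stdGaussianPDF t := by
  unfold stdGaussianCDF
  have h := intervalIntegral.integral_Iic_sub_Iic (a:=(0:ℝ)) (b:=y) (μ := volume)
    pdf_integrable.integrableOn pdf_integrable.integrableOn
  linarith

lemma cdf_hasDeriv (x : ℝ) : HasDerivAt stdGaussianCDF (stdGaussianPDF x) x := by
  have h : HasDerivAt (fun y => ∫ t in (0:ℝ)..y, stdGaussianPDF t) (stdGaussianPDF x) x := by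
    exact intervalIntegral.integral_hasDerivAt_right
      (pdf_integrable.intervalIntegrable)
      pdf_cont.stronglyMeasurable.stronglyMeasurableAtFilter
      pdf_cont.continuousAt
  have := (h.const_add (stdGaussianCDF 0))
  have e : stdGaussianCDF = fun y => stdGaussianCDF 0 + ∫ t in (0:ℝ)..y, stdGaussianPDF t := by
    funext y
    exact cdf_eq y
  rw [e]; exact this

lemma cdf_mono : StrictMono stdGaussianCDF := by
  intro a b hab
  rw [cdf_eq a, cdf_eq b]
  have : (0:ℝ) < ∫ t in a..b, stdGaussianPDF t :=
    intervalIntegral.intervalIntegral_pos_of_pos (pdf_integrable.intervalIntegrable) (fun t => pdf_pos t) hab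
  have h2 := intervalIntegral.integral_add_adjacent_intervals
    (pdf_integrable.intervalIntegrable (a:=0) (b:=a)) (pdf_integrable.intervalIntegrable (a:=a) (b:=b))
  linarith

lemma cdf_pos (x : ℝ) : 0 < stdGaussianCDF x := by
  have h1 : stdGaussianCDF (x-1) < stdGaussianCDF x := cdf_mono (by linarith)
  have h0 : 0 ≤ stdGaussianCDF (x-1) :=
    setIntegral_nonneg measurableSet_Iic (fun t _ => pdf_nonneg t)
  linarith

lemma cdf_lt_one (x : ℝ) : stdGaussianCDF x < 1 := by
  have h1 : stdGaussianCDF x < stdGaussianCDF (x+1) := cdf_mono (by linarith)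
  have h2 : stdGaussianCDF (x+1) ≤ 1 := by
    have hi := integral_pdf
    have := intervalIntegral.integral_Iic_add_Ioi (pdf_integrable.integrableOn (s := Set.Iic (x+1)))
      (pdf_integrable.integrableOn (s := Set.Ioi (x+1)))
    have h3 : 0 ≤ ∫ t in Set.Ioi (x+1), stdGaussianPDF t :=
      setIntegral_nonneg measurableSet_Ioi (fun t _ => pdf_nonneg t)
    unfold stdGaussianCDF
    unfold stdGaussianCDF at *
    linarith
  linarith

lemma pdf_eq_max {x : ℝ} (h : stdGaussianPDF x = 1 / Real.sqrt (2 * Real.pi)) : x = 0 := by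
  have hS : 0 < Real.sqrt (2 * Real.pi) := by have := Real.pi_pos; positivity
  unfold stdGaussianPDF at h
  have hexp : Real.exp (-x ^ 2 / 2) = 1 := by
    rw [div_eq_div_iff hS.ne' hS.ne'] at h
    have h1 : Real.exp (-x ^ 2 / 2) * Real.sqrt (2 * Real.pi)
        = 1 * Real.sqrt (2 * Real.pi) := by linarith
    exact mul_right_cancel₀ hS.ne' h1
  have h0 : -x ^ 2 / 2 = 0 := Real.exp_eq_exp.mp (by rw [hexp, Real.exp_zero])
  nlinarith [sq_nonneg x]


/-- The standard normal quantile function `Φ⁻¹`. -/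
noncomputable def stdGaussianCDFInv (c : ℝ) : ℝ := Function.invFun stdGaussianCDF c

/-- Under the precision condition `Σₖ mᵏ/σₖ ≤ √(2π)/σ²`, the fixed-point map `W` has
nonpositive derivative on `(0,1)` and a unique zero there. -/
theorem stmt7 {K : Type*} [Fintype K] [Nonempty K] (m σk : K → ℝ) (σ μ c : ℝ)
    (hm : ∀ k, 0 < m k) (hsum : ∑ k, m k = 1) (hσ : 0 < σ) (hσk : ∀ k, 0 < σk k)
    (hc : c ∈ Set.Ioo (0:ℝ) 1)
    (hprec : ∑ k, m k / σk k ≤ Real.sqrt (2 * Real.pi) / σ ^ 2) (W : ℝ → ℝ)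
    (hW : ∀ θ, W θ = (∑ k, m k * stdGaussianCDF
        ((Real.sqrt (σ ^ 2 + σk k ^ 2) * stdGaussianCDFInv c + σ ^ 2 * μ - σ ^ 2 * θ)
          / (-σk k))) - θ) :
    (∀ θ ∈ Set.Ioo (0:ℝ) 1, deriv W θ ≤ 0) ∧
    ∃! θstar, θstar ∈ Set.Ioo (0:ℝ) 1 ∧ W θstar = 0 := by
  have hπ := Real.pi_pos
  have hS : 0 < Real.sqrt (2 * Real.pi) := by positivity
  set S := Real.sqrt (2 * Real.pi) with hSdef
  set arg : K → ℝ → ℝ := fun k θ =>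
    (Real.sqrt (σ ^ 2 + σk k ^ 2) * stdGaussianCDFInv c + σ ^ 2 * μ - σ ^ 2 * θ) / (-σk k)
    with hargdef
  set F : ℝ → ℝ := fun θ => ∑ k, m k * (stdGaussianPDF (arg k θ) * (σ ^ 2 / σk k)) with hFdef
  have hWeq : W = fun θ => (∑ k, m k * stdGaussianCDF (arg k θ)) - θ := funext hW
  -- derivative of arg
  have hargD : ∀ k θ, HasDerivAt (arg k) (σ ^ 2 / σk k) θ := by
    intro k θ
    have h1 := (((hasDerivAt_id θ).const_mul (σ ^ 2)).const_sub
        (Real.sqrt (σ ^ 2 + σk k ^ 2) * stdGaussianCDFInv c + σ ^ 2 * μ)).div_const (-σk k)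
    simp only [id_eq, mul_one] at h1
    have h2 : -(σ ^ 2) / (-σk k) = σ ^ 2 / σk k := neg_div_neg_eq _ _
    rw [h2] at h1
    exact h1
  have hWd : ∀ θ, HasDerivAt W (F θ - 1) θ := by
    intro θ
    rw [hWeq]
    have hsum' : HasDerivAt (fun θ => ∑ k, m k * stdGaussianCDF (arg k θ)) (F θ) θ := by
      rw [hFdef]
      apply HasDerivAt.fun_sum
      intro k _
      have hc2 : HasDerivAt (fun θ => stdGaussianCDF (arg k θ))
          (stdGaussianPDF (arg k θ) * (σ ^ 2 / σk k)) θ :=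
        (cdf_hasDeriv (arg k θ)).comp θ (hargD k θ)
      exact hc2.const_mul (m k)
    exact hsum'.sub (hasDerivAt_id' (x := θ))
  -- termwise bound
  have hterm : ∀ θ (k : K), m k * (stdGaussianPDF (arg k θ) * (σ ^ 2 / σk k))
      ≤ (σ ^ 2 / S) * (m k / σk k) := by
    intro θ k
    have h1 : m k * (stdGaussianPDF (arg k θ) * (σ ^ 2 / σk k))
        ≤ m k * ((1 / S) * (σ ^ 2 / σk k)) := by
      have := pdf_le (arg k θ)
      have hmk := (hm k).le
      have hsk := (hσk k).le
      gcongr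
    refine h1.trans_eq ?_
    ring
  have hFle : ∀ θ, F θ ≤ 1 := by
    intro θ
    have h2 : F θ ≤ ∑ k, (σ ^ 2 / S) * (m k / σk k) :=
      Finset.sum_le_sum fun k _ => hterm θ k
    have h3 : ∑ k, (σ ^ 2 / S) * (m k / σk k) = (σ ^ 2 / S) * ∑ k, m k / σk k := by
      rw [Finset.mul_sum]
    have h4 : (σ ^ 2 / S) * (∑ k, m k / σk k) ≤ (σ ^ 2 / S) * (S / σ ^ 2) :=
      mul_le_mul_of_nonneg_left hprec (by positivity)
    have h5 : (σ ^ 2 / S) * (S / σ ^ 2) = 1 := by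
      field_simp
    linarith
  -- equality case forces arg = 0
  have hzero : ∀ t, F t = 1 → ∀ k, arg k t = 0 := by
    intro t ht k
    set g : K → ℝ := fun k =>
      (σ ^ 2 / S) * (m k / σk k) - m k * (stdGaussianPDF (arg k t) * (σ ^ 2 / σk k)) with hg
    have hgnonneg : ∀ j ∈ Finset.univ, (0:ℝ) ≤ g j := fun j _ => sub_nonneg.mpr (hterm t j)
    have hgsum : ∑ j, g j ≤ 0 := by
      have h3 : ∑ j, (σ ^ 2 / S) * (m j / σk j) = (σ ^ 2 / S) * ∑ j, m j / σk j := by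
        rw [Finset.mul_sum]
      have h4 : (σ ^ 2 / S) * (∑ j, m j / σk j) ≤ (σ ^ 2 / S) * (S / σ ^ 2) :=
        mul_le_mul_of_nonneg_left hprec (by positivity)
      have h5 : (σ ^ 2 / S) * (S / σ ^ 2) = 1 := by field_simp
      have h6 : ∑ j, g j = (∑ j, (σ ^ 2 / S) * (m j / σk j)) - F t := by
        rw [hg, hFdef, Finset.sum_sub_distrib]
      rw [h6, ht]
      linarith
    have hgz : g k = 0 :=
      (Finset.sum_eq_zero_iff_of_nonneg hgnonneg).mp
        (le_antisymm hgsum (Finset.sum_nonneg hgnonneg)) k (Finset.mem_univ k)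
    have hne : m k * (σ ^ 2 / σk k) ≠ 0 := by
      have := hm k; have := hσk k; positivity
    have hcancel : m k * (σ ^ 2 / σk k) * (1 / S)
        = m k * (σ ^ 2 / σk k) * stdGaussianPDF (arg k t) := by
      rw [hg] at hgz
      linear_combination hgz
    have hφ : stdGaussianPDF (arg k t) = 1 / S := (mul_left_cancel₀ hne hcancel).symm
    exact pdf_eq_max hφ
  -- antitone
  have hdiff : Differentiable ℝ W := fun θ => (hWd θ).differentiableAt
  have hderiv_le : ∀ θ, deriv W θ ≤ 0 := by
    intro θ
    rw [(hWd θ).deriv]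
    linarith [hFle θ]
  have hA : Antitone W := antitone_of_deriv_nonpos hdiff hderiv_le
  refine ⟨fun θ _ => hderiv_le θ, ?_⟩
  -- boundary values
  have hW0 : 0 < W 0 := by
    simp only [hWeq]
    have : (0:ℝ) < ∑ k, m k * stdGaussianCDF (arg k 0) :=
      Finset.sum_pos (fun k _ => mul_pos (hm k) (cdf_pos _)) Finset.univ_nonempty
    linarith
  have hW1 : W 1 < 0 := by
    simp only [hWeq]
    have h1 : ∑ k, m k * stdGaussianCDF (arg k 1) < ∑ k, m k := by
      apply Finset.sum_lt_sum_of_nonempty Finset.univ_nonempty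
      intro k _
      have := cdf_lt_one (arg k 1)
      nlinarith [hm k]
    rw [hsum] at h1
    linarith
  -- existence via IVT
  have hIVT := intermediate_value_Icc' (by norm_num : (0:ℝ) ≤ 1) hdiff.continuous.continuousOn
  have h0mem : (0:ℝ) ∈ Set.Icc (W 1) (W 0) := ⟨hW1.le, hW0.le⟩
  obtain ⟨θs, hθs, hWθs⟩ := hIVT h0mem
  have hθsIoo : θs ∈ Set.Ioo (0:ℝ) 1 := by
    constructor
    · rcases lt_or_eq_of_le hθs.1 with h | h
      · exact h
      · exfalso; rw [← h] at hWθs; linarith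
    · rcases lt_or_eq_of_le hθs.2 with h | h
      · exact h
      · exfalso; rw [h] at hWθs; linarith
  -- uniqueness
  have key : ∀ a b : ℝ, a < b → W a = 0 → W b = 0 → False := by
    intro a b hab hWa hWb
    have hconst : ∀ t ∈ Set.Ioo a b, W t = 0 := by
      intro t ht
      have h1 : W t ≤ W a := hA ht.1.le
      have h2 : W b ≤ W t := hA ht.2.le
      rw [hWa] at h1; rw [hWb] at h2
      linarith
    have hder0 : ∀ t ∈ Set.Ioo a b, deriv W t = 0 := by
      intro t ht
      have hev : W =ᶠ[nhds t] (fun _ => (0:ℝ)) := by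
        filter_upwards [Ioo_mem_nhds ht.1 ht.2] with y hy using hconst y hy
      rw [hev.deriv_eq]
      simp
    have hta : a + (b - a) / 3 ∈ Set.Ioo a b := ⟨by linarith, by linarith⟩
    have htb : a + 2 * (b - a) / 3 ∈ Set.Ioo a b := ⟨by linarith, by linarith⟩
    have hFa : F (a + (b - a) / 3) = 1 := by
      have h := (hWd (a + (b - a) / 3)).deriv
      rw [hder0 _ hta] at h
      linarith
    have hFb : F (a + 2 * (b - a) / 3) = 1 := by
      have h := (hWd (a + 2 * (b - a) / 3)).deriv
      rw [hder0 _ htb] at h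
      linarith
    obtain k0 : K := Classical.arbitrary K
    have h1 := hzero _ hFa k0
    have h2 := hzero _ hFb k0
    rw [hargdef] at h1 h2
    simp only [div_eq_zero_iff, neg_eq_zero] at h1 h2
    rcases h1 with h1 | h1
    · rcases h2 with h2 | h2
      · have : σ ^ 2 * (a + (b - a) / 3) = σ ^ 2 * (a + 2 * (b - a) / 3) := by linarith
        have hσ2 : (0:ℝ) < σ ^ 2 := by positivity
        nlinarith
      · exact (hσk k0).ne' h2
    · exact (hσk k0).ne' h1
  refine ⟨θs, ⟨hθsIoo, hWθs⟩, ?_⟩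
  rintro y ⟨hy, hWy⟩
  rcases lt_trichotomy y θs with h | h | h
  · exact absurd (key y θs h hWy hWθs) not_false
  · exact h
  · exact absurd (key θs y h hWθs hWy) not_false
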